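/- arXiv:2203.04054 — 2 statements merged into one kernel-verified Lean document; each statement's English description precedes it below -/
import Mathlib

section
/- Let n ≥ 2, p ≥ 1 with p ≠ 1 and p ≠ 2, x ∈ T^n, j ∈ {1,...,n}, and μ a Borel probability measure on T^n. Then lim_{s→0+} [T^p_μ(x + s e^j) − 2 T^p_μ(x) + T^p_μ(x − s e^j)]/s = −p ∫_{H(x + (1/2)e^j, j)} (1/4 + ϱ_{n−1}(x̌_j, y̌_j)^2)^{(p−2)/2} dμ(y). -/
open MeasureTheory Filter

/-- The `p`-Wasserstein distance with cost function `c` (the distance of the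
underlying space): infimum over couplings of `∫ c(x,y)^p dπ`, to the power `1/p`. -/
noncomputable def wassersteinDist {X : Type*} [MeasurableSpace X]
    (c : X → X → ℝ) (p : ℝ) (μ ν : Measure X) : ℝ :=
  sInf {r : ℝ | ∃ π : Measure (X × X), IsProbabilityMeasure π ∧
      π.map Prod.fst = μ ∧ π.map Prod.snd = ν ∧
      r = ∫ q, c q.1 q.2 ^ p ∂π} ^ (1 / p)

/-- The flat `n`-dimensional torus `ℝ^n/ℤ^n`. -/
abbrev Torus (n : ℕ) := Fin n → AddCircle (1 : ℝ)

/-- The flat (ℓ²) metric on the torus: each coordinate distance is the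
distance `|(x_k - y_k) mod 1|` on `ℝ/ℤ`. -/
noncomputable def torusDist {n : ℕ} (x y : Torus n) : ℝ :=
  Real.sqrt (∑ k, dist (x k) (y k) ^ 2)

/-- The `p`-Wasserstein potential of `μ` at `x`: `T^p_μ(x) = ∫ ϱ(x,y)^p dμ(y)`. -/
noncomputable def torusPotential {n : ℕ} (p : ℝ) (μ : MeasureTheory.Measure (Torus n))
    (x : Torus n) : ℝ :=
  ∫ y, torusDist x y ^ p ∂μ

/-- The point `x + s·e^j` on the torus. -/
noncomputable def torusShift {n : ℕ} (x : Torus n) (j : Fin n) (s : ℝ) : Torus n :=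
  fun i => if i = j then x i + ((s : ℝ) : AddCircle (1 : ℝ)) else x i

/-- The "hyperplane" `H(z,j) = {y : y_j = z_j}`. -/
def torusHyperplane {n : ℕ} (z : Torus n) (j : Fin n) : Set (Torus n) :=
  {y | y j = z j}

/-- The flat distance on `𝕋^{n-1}` between `x̌_j` and `y̌_j`, the points obtained
from `x` and `y` by dropping the `j`-th coordinate. -/
noncomputable def torusDistDrop {n : ℕ} (j : Fin n) (x y : Torus n) : ℝ :=
  Real.sqrt (∑ i ∈ Finset.univ.erase j, dist (x i) (y i) ^ 2)

open Set


lemma circ_exists_lift (z : AddCircle (1:ℝ)) :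
    ∃ t : ℝ, t ∈ Set.Ioc (-(1/2) : ℝ) (1/2) ∧ (t : AddCircle (1:ℝ)) = z := by
  induction z using QuotientAddGroup.induction_on with
  | H b =>
    refine ⟨toIocMod one_pos (-(1/2)) b, ?_, ?_⟩
    · have h := toIocMod_mem_Ioc one_pos (-(1/2)) b
      norm_num at h ⊢
      exact h
    · symm
      rw [QuotientAddGroup.eq_iff_sub_mem, self_sub_toIocMod]
      exact AddSubgroup.zsmul_mem_zmultiples _ _

lemma circ_norm_coe {u : ℝ} (hu : |u| ≤ 1/2) : ‖(u : AddCircle (1:ℝ))‖ = |u| := by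
  rw [AddCircle.norm_coe_eq_abs_iff (1:ℝ) one_ne_zero]
  simpa using hu

lemma circ_norm_le (u : ℝ) : ‖(u : AddCircle (1:ℝ))‖ ≤ 1/2 := by
  simpa using AddCircle.norm_le_half_period (1:ℝ) one_ne_zero (x := (u : AddCircle (1:ℝ)))

lemma circ_norm_coe_le (u : ℝ) : ‖(u : AddCircle (1:ℝ))‖ ≤ |u| := by
  rw [AddCircle.norm_eq]
  simpa using round_le u 0

lemma circ_dist_le (z w : AddCircle (1:ℝ)) : dist z w ≤ 1/2 := by
  rw [dist_eq_norm]
  induction (z - w) using QuotientAddGroup.induction_on with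
  | H b => exact circ_norm_le b

lemma circ_dist_add (a : AddCircle (1:ℝ)) (u t : ℝ) :
    dist (a + (u:AddCircle (1:ℝ))) (a + (t:AddCircle (1:ℝ))) = ‖((u - t : ℝ) : AddCircle (1:ℝ))‖ := by
  rw [dist_eq_norm, add_sub_add_left_eq_sub, AddCircle.coe_sub]

lemma circ_coe_add_one (u : ℝ) : ((u + 1 : ℝ) : AddCircle (1:ℝ)) = (u : AddCircle (1:ℝ)) :=
  AddCircle.coe_add_period 1 u

lemma drop_sq {n : ℕ} (j : Fin n) (x y : Fin n → AddCircle (1:ℝ)) :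
    torusDistDrop j x y ^ 2 = ∑ i ∈ Finset.univ.erase j, dist (x i) (y i) ^ 2 :=
  Real.sq_sqrt (Finset.sum_nonneg fun i _ => sq_nonneg _)

lemma torusDist_rpow {n : ℕ} (p : ℝ) (x y : Fin n → AddCircle (1:ℝ)) (j : Fin n) :
    torusDist x y ^ p = (dist (x j) (y j) ^ 2 + torusDistDrop j x y ^ 2) ^ (p / 2) := by
  have hS : (0:ℝ) ≤ ∑ k, dist (x k) (y k) ^ 2 := Finset.sum_nonneg fun i _ => sq_nonneg _
  rw [torusDist, drop_sq, Finset.add_sum_erase _ (fun k => dist (x k) (y k) ^ 2) (Finset.mem_univ j),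
    Real.sqrt_eq_rpow, ← Real.rpow_mul hS]
  congr 1
  ring

lemma shift_apply_ne {n : ℕ} (x : Fin n → AddCircle (1:ℝ)) (j i : Fin n) (s : ℝ) (h : i ≠ j) :
    torusShift x j s i = x i := if_neg h

lemma shift_apply_self {n : ℕ} (x : Fin n → AddCircle (1:ℝ)) (j : Fin n) (s : ℝ) :
    torusShift x j s j = x j + ((s:ℝ) : AddCircle (1:ℝ)) := if_pos rfl

lemma drop_shift {n : ℕ} (j : Fin n) (x y : Fin n → AddCircle (1:ℝ)) (s : ℝ) :
    torusDistDrop j (torusShift x j s) y = torusDistDrop j x y := by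
  unfold torusDistDrop
  congr 1
  refine Finset.sum_congr rfl fun i hi => ?_
  rw [shift_apply_ne _ _ _ _ (Finset.mem_erase.mp hi).1]


lemma tendsto_shift_aux (d : ℝ) (c : ℝ) (hc : c ≠ 0) :
    Tendsto (fun s : ℝ => d + c * s) (nhdsWithin 0 (Set.Ioi 0)) (nhdsWithin d {d}ᶜ) := by
  apply tendsto_nhdsWithin_of_tendsto_nhds_of_eventually_within
  · have h : Tendsto (fun s : ℝ => d + c * s) (nhds 0) (nhds (d + c * 0)) :=
      (continuous_const.add (continuous_const.mul continuous_id)).tendsto 0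
    simpa using h.mono_left nhdsWithin_le_nhds
  · filter_upwards [self_mem_nhdsWithin] with s hs
    simp only [Set.mem_compl_iff, Set.mem_singleton_iff]
    intro h
    have hs0 : c * s = 0 := by linarith
    rcases mul_eq_zero.mp hs0 with h' | h'
    · exact hc h'
    · exact (ne_of_gt hs) h'

lemma tendsto_slope_right {f : ℝ → ℝ} {d f' : ℝ} (hf : HasDerivAt f f' d) :
    Tendsto (fun s : ℝ => (f (d + s) - f d) / s) (nhdsWithin 0 (Set.Ioi 0)) (nhds f') := by
  have h0 := tendsto_shift_aux d 1 one_ne_zero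
  simp only [one_mul] at h0
  have h1 := (hasDerivAt_iff_tendsto_slope.mp hf).comp h0
  apply h1.congr
  intro s
  rw [Function.comp_apply, slope_def_field, add_sub_cancel_left]

lemma tendsto_slope_left {f : ℝ → ℝ} {d f' : ℝ} (hf : HasDerivAt f f' d) :
    Tendsto (fun s : ℝ => (f (d - s) - f d) / s) (nhdsWithin 0 (Set.Ioi 0)) (nhds (-f')) := by
  have h0 := tendsto_shift_aux d (-1) (by norm_num)
  simp only [neg_one_mul, ← sub_eq_add_neg] at h0
  have h1 := ((hasDerivAt_iff_tendsto_slope.mp hf).comp h0).neg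
  apply h1.congr
  intro s
  rw [Function.comp_apply, slope_def_field]
  rw [show d - s - d = -s by ring, div_neg, neg_neg]

lemma tendsto_second_diff {f : ℝ → ℝ} {d f' : ℝ} (hf : HasDerivAt f f' d) :
    Tendsto (fun s : ℝ => (f (d - s) + f (d + s) - 2 * f d) / s)
      (nhdsWithin 0 (Set.Ioi 0)) (nhds 0) := by
  have h := (tendsto_slope_left hf).add (tendsto_slope_right hf)
  rw [neg_add_cancel] at h
  apply h.congr
  intro s
  rw [← add_div]
  ring_nf

lemma hasDerivAt_h (p r u : ℝ) (h : 0 < u ^ 2 + r ^ 2) :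
    HasDerivAt (fun v : ℝ => (v ^ 2 + r ^ 2) ^ (p / 2))
      (p * u * (u ^ 2 + r ^ 2) ^ ((p - 2) / 2)) u := by
  have h1 : HasDerivAt (fun v : ℝ => v ^ 2 + r ^ 2) (2 * u) u := by
    simpa using (hasDerivAt_pow 2 u).add_const (r ^ 2)
  have h2 := (Real.hasDerivAt_rpow_const (x := u ^ 2 + r ^ 2) (p := p / 2)
    (Or.inl h.ne')).comp u h1
  refine h2.congr_deriv ?_
  rw [show (p - 2) / 2 = p / 2 - 1 by ring]
  ring


lemma rpow_sub_rpow_le {p M a b : ℝ} (hp : 1 ≤ p) (ha : 0 ≤ a) (hab : a ≤ b) (hbM : b ≤ M) :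
    b ^ p - a ^ p ≤ p * M ^ (p - 1) * (b - a) := by
  have hb0 : 0 ≤ b := ha.trans hab
  rcases hb0.eq_or_lt with hb | hb
  · have ha0 : a = 0 := le_antisymm (hab.trans hb.symm.le) ha
    simp [← hb, ha0]
  · have hM0 : 0 ≤ M := hb0.trans hbM
    have key := one_add_mul_self_le_rpow_one_add (s := a / b - 1)
      (by have : 0 ≤ a / b := div_nonneg ha hb0; linarith) hp
    rw [add_sub_cancel] at key
    have hdiv : (a / b) ^ p = a ^ p / b ^ p := Real.div_rpow ha hb0 p
    have hbp : 0 < b ^ p := Real.rpow_pos_of_pos hb p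
    have h1 : b ^ p * (1 + p * (a / b - 1)) ≤ a ^ p := by
      calc b ^ p * (1 + p * (a / b - 1)) ≤ b ^ p * ((a / b) ^ p) :=
            mul_le_mul_of_nonneg_left key hbp.le
        _ = a ^ p := by rw [hdiv]; field_simp
    have hbp' : b ^ p = b ^ (p - 1) * b := by
      rw [← Real.rpow_add_one hb.ne' (p - 1), sub_add_cancel]
    have h2 : b ^ p - a ^ p ≤ p * b ^ (p - 1) * (b - a) := by
      have e : b ^ p * (1 + p * (a / b - 1)) = b ^ p + p * (b ^ (p - 1) * a) - p * b ^ p := by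
        rw [hbp']
        field_simp
        ring
      rw [e] at h1
      nlinarith [h1]
    have h3 : b ^ (p - 1) ≤ M ^ (p - 1) := Real.rpow_le_rpow hb0 hbM (by linarith)
    have h4 : 0 ≤ b - a := sub_nonneg.mpr hab
    refine h2.trans ?_
    have := mul_le_mul_of_nonneg_right h3 h4
    nlinarith [this, (by linarith : (0:ℝ) ≤ p)]

lemma abs_rpow_sub_rpow_le {p M a b : ℝ} (hp : 1 ≤ p) (ha : 0 ≤ a) (hb : 0 ≤ b)
    (haM : a ≤ M) (hbM : b ≤ M) : |b ^ p - a ^ p| ≤ p * M ^ (p - 1) * |b - a| := by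
  rcases le_total a b with h | h
  · rw [abs_of_nonneg (by simpa using Real.rpow_le_rpow ha h (by linarith)),
      abs_of_nonneg (sub_nonneg.mpr h)]
    exact rpow_sub_rpow_le hp ha h hbM
  · rw [abs_sub_comm, abs_sub_comm b a,
      abs_of_nonneg (by simpa using Real.rpow_le_rpow hb h (by linarith)),
      abs_of_nonneg (sub_nonneg.mpr h)]
    exact rpow_sub_rpow_le hp hb h haM

lemma coe_zero_circ : ((0 : ℝ) : AddCircle (1:ℝ)) = 0 := by norm_cast

lemma dist_eval (a : AddCircle (1:ℝ)) (u t : ℝ) (h : |u - t| ≤ 1/2) :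
    dist (a + ((u:ℝ) : AddCircle (1:ℝ))) (a + ((t:ℝ) : AddCircle (1:ℝ))) = |u - t| := by
  rw [circ_dist_add, circ_norm_coe h]

lemma dist_eval' (a : AddCircle (1:ℝ)) (u t : ℝ) (h : |u - t + 1| ≤ 1/2) :
    dist (a + ((u:ℝ) : AddCircle (1:ℝ))) (a + ((t:ℝ) : AddCircle (1:ℝ))) = |u - t + 1| := by
  rw [circ_dist_add, ← circ_coe_add_one (u - t), circ_norm_coe h]

lemma circ_pointwise {p : ℝ} (hp : 1 < p) {r : ℝ} (hr : 0 ≤ r) (a b : AddCircle (1:ℝ)) :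
    Tendsto (fun s : ℝ =>
      ((dist (a + ((s : ℝ) : AddCircle (1:ℝ))) b ^ 2 + r ^ 2) ^ (p / 2)
        - 2 * ((dist a b ^ 2 + r ^ 2) ^ (p / 2))
        + ((dist (a + ((-s : ℝ) : AddCircle (1:ℝ))) b ^ 2 + r ^ 2) ^ (p / 2))) / s)
      (nhdsWithin 0 (Set.Ioi 0))
      (nhds (if b = a + ((1/2 : ℝ) : AddCircle (1:ℝ)) then
        -(p * (1/4 + r ^ 2) ^ ((p - 2) / 2)) else 0)) := by
  obtain ⟨t, htm, htb⟩ := circ_exists_lift (b - a)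
  have hb : b = a + ((t : ℝ) : AddCircle (1:ℝ)) := by rw [htb]; abel
  have hcond : (b = a + ((1/2 : ℝ) : AddCircle (1:ℝ))) ↔ t = 1/2 := by
    constructor
    · intro h
      have h2 : ((t : ℝ) : AddCircle (1:ℝ)) = ((1/2 : ℝ) : AddCircle (1:ℝ)) :=
        add_left_cancel (hb.symm.trans h)
      have h3 : ((t - 1/2 : ℝ) : AddCircle (1:ℝ)) = 0 := by
        rw [AddCircle.coe_sub, h2, sub_self]
      obtain ⟨k, hk⟩ := (AddCircle.coe_eq_zero_iff _).mp h3
      rw [zsmul_eq_mul, mul_one] at hk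
      have hk1 : (-1 : ℝ) < (k:ℝ) := by rw [hk]; linarith [htm.1]
      have hk2 : (k:ℝ) ≤ 0 := by rw [hk]; linarith [htm.2]
      have hk0 : k = 0 := by
        have h1 : (-1 : ℤ) < k := by exact_mod_cast hk1
        have h2 : k ≤ (0 : ℤ) := by exact_mod_cast hk2
        omega
      rw [hk0] at hk
      simp at hk
      linarith [hk]
    · intro h
      rw [hb, h]
  have hdab : dist a b = |t| := by
    nth_rewrite 1 [show a = a + ((0:ℝ) : AddCircle (1:ℝ)) by rw [coe_zero_circ, add_zero]]
    rw [hb, dist_eval a 0 t (by rw [zero_sub, abs_neg]; exact abs_le.mpr ⟨le_of_lt htm.1, htm.2⟩)]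
    rw [zero_sub, abs_neg]
  rcases eq_or_ne t (1/2) with ht | ht
  · -- case t = 1/2 : the hyperplane case
    rw [if_pos (hcond.mpr ht)]
    subst ht
    have hd : HasDerivAt (fun u : ℝ => (u ^ 2 + r ^ 2) ^ (p / 2))
        (p * (1/2) * ((1/2 : ℝ) ^ 2 + r ^ 2) ^ ((p - 2) / 2)) (1/2) :=
      hasDerivAt_h p r (1/2) (by positivity)
    have base := (tendsto_slope_left hd).const_mul (2 : ℝ)
    have hval : (2 : ℝ) * -(p * (1/2) * ((1/2 : ℝ) ^ 2 + r ^ 2) ^ ((p - 2) / 2))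
        = -(p * (1/4 + r ^ 2) ^ ((p - 2) / 2)) := by norm_num; ring
    rw [hval] at base
    refine base.congr' ?_
    filter_upwards [Ioo_mem_nhdsGT_of_mem
      (by constructor <;> norm_num : (0:ℝ) ∈ Set.Ico (0:ℝ) (1/2))] with s hs
    obtain ⟨hs0, hs1⟩ := hs
    have h1 : dist (a + ((s : ℝ) : AddCircle (1:ℝ))) b = 1/2 - s := by
      rw [hb, dist_eval a s (1/2) (by rw [abs_of_nonpos (by linarith)]; linarith)]
      rw [abs_of_nonpos (by linarith)]; ring
    have h2 : dist (a + ((-s : ℝ) : AddCircle (1:ℝ))) b = 1/2 - s := by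
      rw [hb, dist_eval' a (-s) (1/2) (by rw [abs_of_nonneg (by linarith)]; linarith)]
      rw [abs_of_nonneg (by linarith)]; ring
    have h0 : dist a b = 1/2 := by rw [hdab]; norm_num
    simp only [h1, h2, h0]
    field_simp
    ring
  · rw [if_neg (fun h => ht (hcond.mp h))]
    rcases eq_or_ne t 0 with ht0 | ht0
    · -- case t = 0 : b = a
      subst ht0
      have h0 : dist a b = 0 := by rw [hdab]; norm_num
      rcases eq_or_ne r 0 with hr0 | hr0
      · -- r = 0
        subst hr0
        have cont : Tendsto (fun s : ℝ => 2 * s ^ (p - 1))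
            (nhdsWithin 0 (Set.Ioi 0)) (nhds 0) := by
          have c1 : ContinuousAt (fun s : ℝ => s ^ (p - 1)) 0 :=
            Real.continuousAt_rpow_const 0 (p - 1) (Or.inr (by linarith))
          have c2 := (c1.tendsto.mono_left
            (nhdsWithin_le_nhds : nhdsWithin (0:ℝ) (Set.Ioi 0) ≤ nhds 0)).const_mul (2 : ℝ)
          simpa [Real.zero_rpow (by linarith : p - 1 ≠ 0)] using c2
        refine cont.congr' ?_
        filter_upwards [Ioo_mem_nhdsGT_of_mem
          (by constructor <;> norm_num : (0:ℝ) ∈ Set.Ico (0:ℝ) (1/2))] with s hs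
        obtain ⟨hs0, hs1⟩ := hs
        have h1 : dist (a + ((s : ℝ) : AddCircle (1:ℝ))) b = s := by
          rw [hb, dist_eval a s 0 (by rw [sub_zero, abs_of_nonneg hs0.le]; linarith),
            sub_zero, abs_of_nonneg hs0.le]
        have h2 : dist (a + ((-s : ℝ) : AddCircle (1:ℝ))) b = s := by
          rw [hb, dist_eval a (-s) 0
            (by rw [sub_zero, abs_neg, abs_of_nonneg hs0.le]; linarith),
            sub_zero, abs_neg, abs_of_nonneg hs0.le]
        have e1 : ((s:ℝ) ^ 2 + 0 ^ 2 : ℝ) ^ (p/2) = s ^ p := by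
          rw [show (s ^ 2 + 0 ^ 2 : ℝ) = s ^ 2 by ring, ← Real.rpow_natCast s 2,
            ← Real.rpow_mul hs0.le]
          norm_num
          congr 1
          ring
        have e0 : ((0:ℝ) ^ 2 + 0 ^ 2 : ℝ) ^ (p/2) = 0 := by
          rw [show ((0:ℝ) ^ 2 + 0 ^ 2 : ℝ) = 0 by norm_num]
          exact Real.zero_rpow (by intro h; apply hp.ne'; linarith)
        simp only [h1, h2, h0, e1, e0]
        rw [Real.rpow_sub_one hs0.ne' p]
        field_simp
        ring
      · -- r ≠ 0
        have hr2 : 0 < r ^ 2 := lt_of_le_of_ne (sq_nonneg r) (Ne.symm (pow_ne_zero 2 hr0))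
        have hd : HasDerivAt (fun u : ℝ => (u ^ 2 + r ^ 2) ^ (p / 2))
            (p * 0 * ((0:ℝ) ^ 2 + r ^ 2) ^ ((p - 2) / 2)) 0 :=
          hasDerivAt_h p r 0 (by nlinarith)
        have base := (tendsto_slope_right hd).const_mul (2 : ℝ)
        have hv : (2:ℝ) * (p * 0 * ((0:ℝ) ^ 2 + r ^ 2) ^ ((p - 2) / 2)) = 0 := by ring
        rw [hv] at base
        refine base.congr' ?_
        filter_upwards [Ioo_mem_nhdsGT_of_mem
          (by constructor <;> norm_num : (0:ℝ) ∈ Set.Ico (0:ℝ) (1/2))] with s hs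
        obtain ⟨hs0, hs1⟩ := hs
        have h1 : dist (a + ((s : ℝ) : AddCircle (1:ℝ))) b = s := by
          rw [hb, dist_eval a s 0 (by rw [sub_zero, abs_of_nonneg hs0.le]; linarith),
            sub_zero, abs_of_nonneg hs0.le]
        have h2 : dist (a + ((-s : ℝ) : AddCircle (1:ℝ))) b = s := by
          rw [hb, dist_eval a (-s) 0
            (by rw [sub_zero, abs_neg, abs_of_nonneg hs0.le]; linarith),
            sub_zero, abs_neg, abs_of_nonneg hs0.le]
        simp only [h1, h2, h0, zero_add]
        field_simp
        ring
    · -- case 0 < |t| < 1/2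
      have htpos : 0 < |t| := abs_pos.mpr ht0
      have htlt : |t| < 1/2 := by
        rcases lt_or_gt_of_ne ht0 with h | h
        · rw [abs_of_neg h]; linarith [htm.1]
        · rw [abs_of_pos h]; exact lt_of_le_of_ne htm.2 ht
      have hd : HasDerivAt (fun u : ℝ => (u ^ 2 + r ^ 2) ^ (p / 2))
          (p * |t| * (|t| ^ 2 + r ^ 2) ^ ((p - 2) / 2)) |t| :=
        hasDerivAt_h p r |t| (by nlinarith [sq_nonneg r])
      have base := tendsto_second_diff hd
      refine base.congr' ?_
      filter_upwards [Ioo_mem_nhdsGT_of_mem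
        (⟨le_refl (0:ℝ), lt_min htpos (by linarith)⟩ :
          (0:ℝ) ∈ Set.Ico (0:ℝ) (min |t| (1/2 - |t|)))] with s hs
      obtain ⟨hs0, hs1⟩ := hs
      have hs2 : s < |t| := lt_of_lt_of_le hs1 (min_le_left _ _)
      have hs3 : s < 1/2 - |t| := lt_of_lt_of_le hs1 (min_le_right _ _)
      rcases lt_or_gt_of_ne ht0 with htneg | htpos'
      · have habs : |t| = -t := abs_of_neg htneg
        rw [habs] at hs2 hs3
        have h1 : dist (a + ((s : ℝ) : AddCircle (1:ℝ))) b = |t| + s := by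
          rw [hb, dist_eval a s t (by rw [abs_of_pos (by linarith)]; linarith),
            abs_of_pos (by linarith : (0:ℝ) < s - t), habs]
          ring
        have h2 : dist (a + ((-s : ℝ) : AddCircle (1:ℝ))) b = |t| - s := by
          rw [hb, dist_eval a (-s) t (by rw [abs_of_pos (by linarith)]; linarith),
            abs_of_pos (by linarith : (0:ℝ) < -s - t), habs]
          ring
        simp only [h1, h2, hdab]
        ring
      · have habs : |t| = t := abs_of_pos htpos'
        rw [habs] at hs2 hs3
        have h1 : dist (a + ((s : ℝ) : AddCircle (1:ℝ))) b = |t| - s := by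
          rw [hb, dist_eval a s t (by rw [abs_of_neg (by linarith)]; linarith),
            abs_of_neg (by linarith : s - t < 0), habs]
          ring
        have h2 : dist (a + ((-s : ℝ) : AddCircle (1:ℝ))) b = |t| + s := by
          rw [hb, dist_eval a (-s) t (by rw [abs_of_neg (by linarith)]; linarith),
            abs_of_neg (by linarith : -s - t < 0), habs]
          ring
        simp only [h1, h2, hdab]
        ring

lemma torusDist_nonneg {n : ℕ} (x y : Fin n → AddCircle (1:ℝ)) : 0 ≤ torusDist x y :=
  Real.sqrt_nonneg _

lemma torusDist_eq_pilp {n : ℕ} (x y : Fin n → AddCircle (1:ℝ)) :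
    torusDist x y = @dist (PiLp 2 (fun _ : Fin n => AddCircle (1:ℝ))) _ (WithLp.toLp 2 x) (WithLp.toLp 2 y) := by
  rw [PiLp.dist_eq_sum (by norm_num : (0:ℝ) < (2 : ENNReal).toReal)]
  unfold torusDist
  rw [Real.sqrt_eq_rpow]
  norm_num

lemma torusDist_shift_self {n : ℕ} (x : Fin n → AddCircle (1:ℝ)) (j : Fin n) (s : ℝ) :
    torusDist (torusShift x j s) x = ‖((s:ℝ) : AddCircle (1:ℝ))‖ := by
  unfold torusDist
  rw [show (∑ k, dist (torusShift x j s k) (x k) ^ 2) = ‖((s:ℝ) : AddCircle (1:ℝ))‖ ^ 2 from ?_]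
  · exact Real.sqrt_sq (norm_nonneg _)
  rw [Finset.sum_eq_single j]
  · rw [shift_apply_self, dist_eq_norm, add_sub_cancel_left]
  · intro k _ hk
    rw [shift_apply_ne _ _ _ _ hk, dist_self]
    norm_num
  · intro h
    exact absurd (Finset.mem_univ j) h

lemma torusDist_lip {n : ℕ} (x y : Fin n → AddCircle (1:ℝ)) (j : Fin n) (s : ℝ) :
    |torusDist (torusShift x j s) y - torusDist x y| ≤ |s| := by
  rw [torusDist_eq_pilp, torusDist_eq_pilp]
  refine le_trans (abs_dist_sub_le _ _ _) ?_
  rw [← torusDist_eq_pilp, torusDist_shift_self]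
  exact circ_norm_coe_le s

lemma torusDist_le_sqrt {n : ℕ} (z y : Fin n → AddCircle (1:ℝ)) :
    torusDist z y ≤ Real.sqrt n := by
  unfold torusDist
  apply Real.sqrt_le_sqrt
  calc ∑ k, dist (z k) (y k) ^ 2 ≤ ∑ _k : Fin n, (1:ℝ) := by
        refine Finset.sum_le_sum fun k _ => ?_
        have h1 := circ_dist_le (z k) (y k)
        have h2 := dist_nonneg (x := z k) (y := y k)
        nlinarith
    _ = n := by simp

lemma torusDist_cont {n : ℕ} (z : Fin n → AddCircle (1:ℝ)) :
    Continuous (fun y => torusDist z y) := by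
  unfold torusDist
  exact Real.continuous_sqrt.comp
    (continuous_finset_sum _ fun k _ => (continuous_const.dist (continuous_apply k)).pow 2)


/-- Second-difference formula for the Wasserstein potential on the torus,
case `p ≥ 1`, `p ≠ 1`, `p ≠ 2`. -/
theorem torus_potential_second_difference {n : ℕ} (hn : 2 ≤ n)
    {p : ℝ} (hp : 1 ≤ p) (hp1 : p ≠ 1) (hp2 : p ≠ 2)
    (x : Torus n) (j : Fin n) (μ : Measure (Torus n)) (hμ : IsProbabilityMeasure μ) :
    Tendsto (fun s : ℝ =>
        (torusPotential p μ (torusShift x j s) - 2 * torusPotential p μ x +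
          torusPotential p μ (torusShift x j (-s))) / s)
      (nhdsWithin 0 (Set.Ioi 0))
      (nhds (-p * ∫ y in torusHyperplane (torusShift x j (1 / 2)) j,
          (1 / 4 + torusDistDrop j x y ^ 2) ^ ((p - 2) / 2) ∂μ)) := by
  have hplt : 1 < p := lt_of_le_of_ne hp (Ne.symm hp1)
  -- the integrand family
  set F : ℝ → Torus n → ℝ := fun s y =>
    (torusDist (torusShift x j s) y ^ p - 2 * torusDist x y ^ p +
      torusDist (torusShift x j (-s)) y ^ p) / s with hF
  -- continuity and integrability of the basic integrand
  have cont_g : ∀ z : Torus n, Continuous (fun y => torusDist z y ^ p) := by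
    intro z
    exact (torusDist_cont z).rpow_const (fun y => Or.inr (by linarith))
  have int_g : ∀ z : Torus n, Integrable (fun y => torusDist z y ^ p) μ := by
    intro z
    refine (integrable_const ((Real.sqrt n) ^ p)).mono' (cont_g z).aestronglyMeasurable ?_
    filter_upwards with y
    rw [Real.norm_eq_abs, abs_of_nonneg (Real.rpow_nonneg (torusDist_nonneg z y) p)]
    exact Real.rpow_le_rpow (torusDist_nonneg z y) (torusDist_le_sqrt z y) (by linarith)
  -- the potential difference quotient equals the integral of F
  have key : ∀ s : ℝ,
      (torusPotential p μ (torusShift x j s) - 2 * torusPotential p μ x +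
        torusPotential p μ (torusShift x j (-s))) / s = ∫ y, F s y ∂μ := by
    intro s
    rw [hF]
    simp only [torusPotential]
    rw [MeasureTheory.integral_div]
    congr 1
    have i2 : Integrable (fun y => 2 * torusDist x y ^ p) μ := (int_g x).const_mul 2
    have i1 : Integrable
        (fun y => torusDist (torusShift x j s) y ^ p - 2 * torusDist x y ^ p) μ :=
      (int_g _).sub i2
    rw [MeasureTheory.integral_add i1 (int_g _), MeasureTheory.integral_sub (int_g _) i2,
      MeasureTheory.integral_const_mul]
  -- the limit function
  set S : Set (Torus n) := torusHyperplane (torusShift x j (1 / 2)) j with hS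
  have hSdef : S = {y : Torus n | y j = x j + ((1/2 : ℝ) : AddCircle (1:ℝ))} := by
    rw [hS]
    unfold torusHyperplane
    ext y
    rw [Set.mem_setOf_eq, Set.mem_setOf_eq, shift_apply_self]
  set L : Torus n → ℝ :=
    S.indicator (fun y => -(p * (1/4 + torusDistDrop j x y ^ 2) ^ ((p - 2) / 2))) with hL
  have hSmeas : MeasurableSet S := by
    rw [hSdef]
    exact (isClosed_eq (continuous_apply j) continuous_const).measurableSet
  -- rewrite F via the j-th coordinate decomposition
  have decompF : ∀ s : ℝ, ∀ y : Torus n, F s y =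
      ((dist (x j + ((s : ℝ) : AddCircle (1:ℝ))) (y j) ^ 2 + torusDistDrop j x y ^ 2) ^ (p / 2)
        - 2 * ((dist (x j) (y j) ^ 2 + torusDistDrop j x y ^ 2) ^ (p / 2))
        + ((dist (x j + ((-s : ℝ) : AddCircle (1:ℝ))) (y j) ^ 2
            + torusDistDrop j x y ^ 2) ^ (p / 2))) / s := by
    intro s y
    rw [hF]
    simp only []
    rw [torusDist_rpow p (torusShift x j s) y j, torusDist_rpow p (torusShift x j (-s)) y j,
      torusDist_rpow p x y j, drop_shift, drop_shift, shift_apply_self, shift_apply_self]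
  -- pointwise convergence
  have h_lim : ∀ y : Torus n, Tendsto (fun s => F s y) (nhdsWithin 0 (Set.Ioi 0)) (nhds (L y)) := by
    intro y
    have hpt := circ_pointwise hplt (Real.sqrt_nonneg _ : 0 ≤ torusDistDrop j x y) (x j) (y j)
    have hLy : L y = (if y j = x j + ((1/2 : ℝ) : AddCircle (1:ℝ)) then
        -(p * (1/4 + torusDistDrop j x y ^ 2) ^ ((p - 2) / 2)) else 0) := by
      by_cases hy : y j = x j + ((1/2 : ℝ) : AddCircle (1:ℝ))
      · rw [hL, Set.indicator_of_mem (by rw [hSdef]; exact hy), if_pos hy]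
      · rw [hL, Set.indicator_of_notMem (by rw [hSdef]; exact hy), if_neg hy]
    rw [hLy]
    refine hpt.congr fun s => ?_
    rw [decompF s y]
    rfl
  -- uniform bound
  have h_bound : ∀ s : ℝ, s ∈ Set.Ioi (0:ℝ) → ∀ y : Torus n,
      ‖F s y‖ ≤ 2 * (p * Real.sqrt n ^ (p - 1)) := by
    intro s hs y
    have hs0 : (0:ℝ) < s := hs
    rw [hF]
    simp only []
    rw [Real.norm_eq_abs, abs_div, abs_of_pos hs0, div_le_iff₀ hs0]
    have b1 : |torusDist (torusShift x j s) y ^ p - torusDist x y ^ p|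
        ≤ p * Real.sqrt n ^ (p - 1) * s := by
      refine le_trans (abs_rpow_sub_rpow_le hp (torusDist_nonneg _ _) (torusDist_nonneg _ _)
        (torusDist_le_sqrt _ _) (torusDist_le_sqrt _ _)) ?_
      refine mul_le_mul_of_nonneg_left ?_ ?_
      · exact le_trans (torusDist_lip x y j s) (le_of_eq (abs_of_pos hs0))
      · positivity
    have b2 : |torusDist (torusShift x j (-s)) y ^ p - torusDist x y ^ p|
        ≤ p * Real.sqrt n ^ (p - 1) * s := by
      refine le_trans (abs_rpow_sub_rpow_le hp (torusDist_nonneg _ _) (torusDist_nonneg _ _)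
        (torusDist_le_sqrt _ _) (torusDist_le_sqrt _ _)) ?_
      refine mul_le_mul_of_nonneg_left ?_ ?_
      · refine le_trans (torusDist_lip x y j (-s)) ?_
        rw [abs_neg, abs_of_pos hs0]
      · positivity
    calc |torusDist (torusShift x j s) y ^ p - 2 * torusDist x y ^ p +
          torusDist (torusShift x j (-s)) y ^ p|
        = |(torusDist (torusShift x j s) y ^ p - torusDist x y ^ p) +
          (torusDist (torusShift x j (-s)) y ^ p - torusDist x y ^ p)| := by
          congr 1
          ring
      _ ≤ |torusDist (torusShift x j s) y ^ p - torusDist x y ^ p| +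
          |torusDist (torusShift x j (-s)) y ^ p - torusDist x y ^ p| := abs_add_le _ _
      _ ≤ 2 * (p * Real.sqrt n ^ (p - 1)) * s := by linarith
  -- dominated convergence
  have hconv : Tendsto (fun s => ∫ y, F s y ∂μ) (nhdsWithin 0 (Set.Ioi 0)) (nhds (∫ y, L y ∂μ)) := by
    refine MeasureTheory.tendsto_integral_filter_of_dominated_convergence
      (fun _ => 2 * (p * Real.sqrt n ^ (p - 1))) ?_ ?_ (integrable_const _) ?_
    · filter_upwards [self_mem_nhdsWithin] with s hs
      refine Continuous.aestronglyMeasurable ?_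
      rw [hF]
      exact (((cont_g _).sub (continuous_const.mul (cont_g x))).add (cont_g _)).div_const s
    · filter_upwards [self_mem_nhdsWithin] with s hs
      filter_upwards with y
      exact h_bound s hs y
    · filter_upwards with y
      exact h_lim y
  -- identify the limit value
  have hval : ∫ y, L y ∂μ = -p * ∫ y in S,
      (1 / 4 + torusDistDrop j x y ^ 2) ^ ((p - 2) / 2) ∂μ := by
    rw [hL, MeasureTheory.integral_indicator hSmeas]
    rw [show (fun y => -(p * (1/4 + torusDistDrop j x y ^ 2) ^ ((p - 2) / 2)))
      = (fun y => (-p) * ((1/4 + torusDistDrop j x y ^ 2) ^ ((p - 2) / 2))) by funext y; ring]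
    rw [MeasureTheory.integral_const_mul]
  rw [← hval]
  refine hconv.congr fun s => (key s).symm
end

section
/- Every isometry ψ of the flat torus T^n (with metric ϱ(x,y) = (Σ_k |(x_k−y_k) mod 1|^2)^{1/2}) has the form ψ(x_1,...,x_n) = (ε_1 x_{σ(1)}, ..., ε_n x_{σ(n)}) + (u_1,...,u_n) for some permutation σ of {1,...,n}, signs ε_1,...,ε_n ∈ {−1,1}, and a point u ∈ T^n. -/
open MeasureTheory Filter

noncomputable section TorusAux

open scoped RealInnerProductSpace

variable {n : ℕ}

abbrev Euc (n : ℕ) := EuclideanSpace ℝ (Fin n)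

def tmap (y : Euc n) : Torus n := fun i => (y i : AddCircle (1:ℝ))

@[simp] lemma tmap_apply (y : Euc n) (i : Fin n) : tmap y i = (y i : AddCircle (1:ℝ)) := rfl

@[simp] lemma tmap_add (a b : Euc n) : tmap (a + b) = tmap a + tmap b := by
  funext i
  simp [tmap, PiLp.add_apply]

@[simp] lemma tmap_zero : tmap (0 : Euc n) = 0 := by
  funext i; simp [tmap]

lemma exists_rep (z : AddCircle (1:ℝ)) : ∃ r : ℝ, (r : AddCircle (1:ℝ)) = z ∧ |r| = ‖z‖ := by
  induction z using QuotientAddGroup.induction_on with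
  | H x =>
    refine ⟨x - round x, ?_, ?_⟩
    · rw [AddCircle.coe_sub]
      simp only [sub_eq_self, AddCircle.coe_eq_zero_iff]
      exact ⟨round x, by simp⟩
    · rw [AddCircle.norm_eq]; norm_num

lemma norm_coe_small {r : ℝ} (h : |r| ≤ 1/2) : ‖(r : AddCircle (1:ℝ))‖ = |r| :=
  (AddCircle.norm_coe_eq_abs_iff (1:ℝ) one_ne_zero).mpr (by simpa using h)

lemma coe_int_eq_zero (k : ℤ) : ((k : ℝ) : AddCircle (1:ℝ)) = 0 := by
  rw [AddCircle.coe_eq_zero_iff]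
  exact ⟨k, by simp⟩

lemma coe_eq_coe_small {a b : ℝ} (h : ((a : AddCircle (1:ℝ))) = b) (hab : |a - b| < 1) :
    a = b := by
  have h0 : ((a - b : ℝ) : AddCircle (1:ℝ)) = 0 := by
    rw [AddCircle.coe_sub, h, sub_self]
  rw [AddCircle.coe_eq_zero_iff] at h0
  obtain ⟨k, hk⟩ := h0
  have hk' : (k : ℝ) = a - b := by simpa using hk
  rw [← hk'] at hab
  have hk0 : k = 0 := by
    have h1 : ((|k| : ℤ) : ℝ) < 1 := by rwa [Int.cast_abs]
    have h2 : |k| < 1 := by exact_mod_cast h1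
    exact Int.abs_lt_one_iff.mp h2
  have h2 : a - b = 0 := by rw [← hk', hk0]; simp
  linarith

lemma torusDist_eq_norm (x y : Torus n) :
    torusDist x y = Real.sqrt (∑ k, ‖x k - y k‖ ^ 2) := by
  simp [torusDist, dist_eq_norm]

lemma torusDist_add_right (x y z : Torus n) :
    torusDist (x + z) (y + z) = torusDist x y := by
  simp [torusDist, Pi.add_apply, dist_add_right]

lemma abs_coord_le_norm (y : Euc n) (i : Fin n) : |y i| ≤ ‖y‖ := by
  rw [EuclideanSpace.norm_eq]
  have h1 : |y i| = Real.sqrt (‖y i‖^2) := by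
    rw [Real.sqrt_sq_eq_abs]; simp [Real.norm_eq_abs]
  rw [h1]
  apply Real.sqrt_le_sqrt
  exact Finset.single_le_sum (f := fun k => ‖y k‖^2) (fun k _ => by positivity) (Finset.mem_univ i)

lemma torusDist_tmap (y y' : Euc n) (h : ∀ i, |y i - y' i| ≤ 1/2) :
    torusDist (tmap y) (tmap y') = ‖y - y'‖ := by
  rw [torusDist_eq_norm, EuclideanSpace.norm_eq]
  congr 1
  apply Finset.sum_congr rfl
  intro i _
  have : tmap y i - tmap y' i = ((y i - y' i : ℝ) : AddCircle (1:ℝ)) := by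
    simp [tmap]
  rw [this, norm_coe_small (h i)]
  simp [PiLp.sub_apply, Real.norm_eq_abs]

lemma coord_dist_le_torusDist (x y : Torus n) (i : Fin n) : dist (x i) (y i) ≤ torusDist x y := by
  rw [torusDist]
  have h1 : dist (x i) (y i) = Real.sqrt (dist (x i) (y i)^2) := by
    rw [Real.sqrt_sq dist_nonneg]
  rw [h1]
  apply Real.sqrt_le_sqrt
  exact Finset.single_le_sum (f := fun k => dist (x k) (y k)^2) (fun k _ => by positivity)
    (Finset.mem_univ i)

lemma dist_le_torusDist (x y : Torus n) : dist x y ≤ torusDist x y := by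
  refine dist_pi_le_iff (by rw [torusDist]; positivity) |>.mpr fun i => coord_dist_le_torusDist x y i

lemma torusDist_le (x y : Torus n) : torusDist x y ≤ Real.sqrt n * dist x y := by
  rw [torusDist]
  have h : ∑ k, dist (x k) (y k)^2 ≤ ∑ _k : Fin n, (dist x y)^2 := by
    apply Finset.sum_le_sum
    intro k _
    have := dist_le_pi_dist x y k
    nlinarith [dist_nonneg (x := x k) (y := y k)]
  calc Real.sqrt (∑ k, dist (x k) (y k)^2) ≤ Real.sqrt (∑ _k : Fin n, (dist x y)^2) :=
        Real.sqrt_le_sqrt h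
    _ = Real.sqrt (n * (dist x y)^2) := by rw [Finset.sum_const]; simp [mul_comm]
    _ = Real.sqrt n * dist x y := by
        rw [Real.sqrt_mul (by positivity), Real.sqrt_sq dist_nonneg]

lemma psi_continuous (ψ : Torus n → Torus n)
    (hdist : ∀ x y : Torus n, torusDist (ψ x) (ψ y) = torusDist x y) : Continuous ψ := by
  rw [Metric.continuous_iff]
  intro x ε hε
  refine ⟨ε / (Real.sqrt n + 1), by positivity, fun y hy => ?_⟩
  have h1 : dist (ψ y) (ψ x) ≤ Real.sqrt n * dist y x :=
    (dist_le_torusDist _ _).trans ((hdist y x).le.trans (torusDist_le y x))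
  have hs : (0:ℝ) ≤ Real.sqrt n := Real.sqrt_nonneg _
  calc dist (ψ y) (ψ x) ≤ Real.sqrt n * dist y x := h1
    _ < (Real.sqrt n + 1) * (ε / (Real.sqrt n + 1)) := by
        apply lt_of_le_of_lt (mul_le_mul_of_nonneg_left hy.le hs)
        apply mul_lt_mul_of_pos_right _ (by positivity)
        linarith
    _ = ε := by field_simp

set_option maxHeartbeats 1000000 in
lemma rigid (g : Euc n → Euc n) (hg0 : g 0 = 0)
    (hgi : ∀ y y' : Euc n, ‖y‖ ≤ 1/8 → ‖y'‖ ≤ 1/8 → ‖g y - g y'‖ = ‖y - y'‖) :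
    ∃ A : Euc n →ₗᵢ[ℝ] Euc n, ∀ y : Euc n, ‖y‖ ≤ 1/8 → g y = A y := by
  rcases Nat.eq_zero_or_pos n with hn | hn
  · subst hn
    refine ⟨LinearIsometry.id, fun y _ => ?_⟩
    have : y = 0 := Subsingleton.elim _ _
    simp [this, hg0]
  have : Nonempty (Fin n) := Fin.pos_iff_nonempty.mp hn
  have hnorm : ∀ y : Euc n, ‖y‖ ≤ 1/8 → ‖g y‖ = ‖y‖ := by
    intro y hy
    have := hgi y 0 hy (by simp)
    simpa [hg0] using this
  have hinner : ∀ y y' : Euc n, ‖y‖ ≤ 1/8 → ‖y'‖ ≤ 1/8 → ⟪g y, g y'⟫ = ⟪y, y'⟫ := by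
    intro y y' hy hy'
    have h2 : ‖g y - g y'‖^2 = ‖y - y'‖^2 := by rw [hgi y y' hy hy']
    rw [norm_sub_sq_real, norm_sub_sq_real, hnorm y hy, hnorm y' hy'] at h2
    linarith
  set e : Fin n → Euc n := fun k => EuclideanSpace.single k (1:ℝ) with he
  set b : Fin n → Euc n := fun k => (8:ℝ) • g ((8:ℝ)⁻¹ • e k) with hb
  have hesmall : ∀ k, ‖(8:ℝ)⁻¹ • e k‖ ≤ 1/8 := by
    intro k
    rw [norm_smul, he]
    simp [EuclideanSpace.norm_single]
  have hbinner : ∀ (k : Fin n) (z : Euc n), ‖z‖ ≤ 1/8 → ⟪b k, g z⟫ = ⟪e k, z⟫ := by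
    intro k z hz
    rw [hb]
    simp only [real_inner_smul_left]
    rw [hinner _ _ (hesmall k) hz, real_inner_smul_left]
    ring
  have hbon : Orthonormal ℝ b := by
    rw [orthonormal_iff_ite]
    intro k l
    have h1 : ⟪b k, b l⟫ = (8:ℝ) * ((8:ℝ) * ⟪g ((8:ℝ)⁻¹ • e k), g ((8:ℝ)⁻¹ • e l)⟫) := by
      rw [hb, real_inner_smul_left, real_inner_smul_right]
    rw [h1, hinner _ _ (hesmall k) (hesmall l), real_inner_smul_left, real_inner_smul_right]
    have h2 : ⟪e k, e l⟫ = if k = l then (1:ℝ) else 0 := by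
      rw [he]
      by_cases hkl : k = l
      · subst hkl; simp [EuclideanSpace.inner_single_left, EuclideanSpace.single_apply]
      · simp [EuclideanSpace.inner_single_left, EuclideanSpace.single_apply, hkl, Ne.symm hkl]
    rw [h2]
    by_cases hkl : k = l
    · simp [hkl]
    · simp [hkl, Ne.symm hkl]
  have hcard : Fintype.card (Fin n) = Module.finrank ℝ (Euc n) := by simp
  let v := basisOfLinearIndependentOfCardEqFinrank hbon.linearIndependent hcard
  have hv : ⇑v = b := coe_basisOfLinearIndependentOfCardEqFinrank _ _
  let B := v.toOrthonormalBasis (by rwa [hv])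
  have hB : ⇑B = b := by rw [Module.Basis.coe_toOrthonormalBasis, hv]
  let A₀ : Euc n →ₗ[ℝ] Euc n :=
    { toFun := fun y => ∑ k, y k • b k
      map_add' := by
        intro a c
        simp [PiLp.add_apply, add_smul, Finset.sum_add_distrib]
      map_smul' := by
        intro m a
        simp [PiLp.smul_apply, smul_smul, Finset.smul_sum] }
  have hA₀ : ∀ y : Euc n, A₀ y = ∑ k, y k • b k := fun y => rfl
  have hcoord : ∀ (k : Fin n) (y : Euc n), ⟪b k, A₀ y⟫ = y k := by
    intro k y
    rw [hA₀]
    exact hbon.inner_right_fintype y k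
  have hgA : ∀ y : Euc n, ‖y‖ ≤ 1/8 → g y = A₀ y := by
    intro y hy
    have h1 : ∑ k, ⟪B k, g y⟫ • B k = g y := B.sum_repr' (g y)
    rw [hB] at h1
    rw [← h1, hA₀]
    apply Finset.sum_congr rfl
    intro k _
    rw [hbinner k y hy]
    congr 1
    rw [he]
    simp [EuclideanSpace.inner_single_left]
  have hnormA : ∀ y : Euc n, ‖A₀ y‖ = ‖y‖ := by
    intro y
    have h1 : ⟪A₀ y, A₀ y⟫ = ∑ k, y k * y k := by
      rw [hA₀, sum_inner]
      apply Finset.sum_congr rfl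
      intro k _
      rw [real_inner_smul_left, ← hA₀, hcoord]
    have h2 : ⟪y, y⟫ = ∑ k, y k * y k := by
      rw [PiLp.inner_apply]
      simp [RCLike.inner_apply]
      exact Finset.sum_congr rfl fun k _ => sq _
    have h3 : ‖A₀ y‖^2 = ‖y‖^2 := by
      rw [← real_inner_self_eq_norm_sq, ← real_inner_self_eq_norm_sq, h1, h2]
    have := congrArg Real.sqrt h3
    rwa [Real.sqrt_sq (norm_nonneg _), Real.sqrt_sq (norm_nonneg _)] at this
  exact ⟨⟨A₀, hnormA⟩, hgA⟩

/-- `ψ` agrees, near `x`, with the translation of the linear isometry `A` (radius `r`). -/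
def LocForm (ψ : Torus n → Torus n) (x : Torus n) (A : Euc n →ₗᵢ[ℝ] Euc n) (r : ℝ) : Prop :=
  ∀ y : Euc n, ‖y‖ ≤ r → ψ (x + tmap y) = ψ x + tmap (A y)

variable {ψ : Torus n → Torus n} (hdist : ∀ x y : Torus n, torusDist (ψ x) (ψ y) = torusDist x y)

include hdist in
lemma exists_locForm (x₀ : Torus n) : ∃ A : Euc n →ₗᵢ[ℝ] Euc n, LocForm ψ x₀ A (1/8) := by
  classical
  -- the lifted map
  set Δ : Euc n → Torus n := fun y => ψ (x₀ + tmap y) - ψ x₀ with hΔ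
  set g : Euc n → Euc n := fun y => WithLp.toLp 2 (fun i => (exists_rep (Δ y i)).choose) with hg
  have hgspec : ∀ (y : Euc n) (i : Fin n),
      ((g y i : ℝ) : AddCircle (1:ℝ)) = Δ y i ∧ |g y i| = ‖Δ y i‖ :=
    fun y i => (exists_rep (Δ y i)).choose_spec
  have htm : ∀ y : Euc n, tmap (g y) = Δ y := by
    intro y; funext i; exact (hgspec y i).1
  -- distance from the base point
  have hΔdist : ∀ y y' : Euc n, torusDist (Δ y) (Δ y') = torusDist (tmap y) (tmap y') := by
    intro y y'
    have h1 : Δ y + ψ x₀ = ψ (x₀ + tmap y) := sub_add_cancel _ _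
    have h2 : Δ y' + ψ x₀ = ψ (x₀ + tmap y') := sub_add_cancel _ _
    calc torusDist (Δ y) (Δ y') = torusDist (Δ y + ψ x₀) (Δ y' + ψ x₀) :=
          (torusDist_add_right _ _ _).symm
      _ = torusDist (ψ (x₀ + tmap y)) (ψ (x₀ + tmap y')) := by rw [h1, h2]
      _ = torusDist (x₀ + tmap y) (x₀ + tmap y') := hdist _ _
      _ = torusDist (tmap y + x₀) (tmap y' + x₀) := by rw [add_comm x₀, add_comm x₀]
      _ = torusDist (tmap y) (tmap y') := torusDist_add_right _ _ _
  have hΔnorm : ∀ y y' : Euc n, ‖y‖ ≤ 1/8 → ‖y'‖ ≤ 1/8 →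
      torusDist (Δ y) (Δ y') = ‖y - y'‖ := by
    intro y y' hy hy'
    rw [hΔdist y y']
    apply torusDist_tmap
    intro i
    have h1 := abs_coord_le_norm y i
    have h2 := abs_coord_le_norm y' i
    have := abs_sub (y i) (y' i)
    calc |y i - y' i| ≤ |y i| + |y' i| := abs_sub _ _
      _ ≤ 1/2 := by linarith
  -- the coordinates of `g` are small
  have hgsmall : ∀ y : Euc n, ‖y‖ ≤ 1/8 → ∀ i, |g y i| ≤ 1/8 := by
    intro y hy i
    rw [(hgspec y i).2]
    have h1 : ‖Δ y i‖ = dist (Δ y i) ((0 : Torus n) i) := by simp [dist_eq_norm]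
    rw [h1]
    calc dist (Δ y i) ((0 : Torus n) i) ≤ torusDist (Δ y) 0 := coord_dist_le_torusDist _ _ i
      _ = ‖y - 0‖ := by
          have h0 : (0 : Torus n) = Δ 0 := by simp [hΔ]
          rw [h0, hΔnorm y 0 hy (by simp)]
      _ = ‖y‖ := by simp
      _ ≤ 1/8 := hy
  -- `g` preserves distances on the small ball
  have hgi : ∀ y y' : Euc n, ‖y‖ ≤ 1/8 → ‖y'‖ ≤ 1/8 → ‖g y - g y'‖ = ‖y - y'‖ := by
    intro y y' hy hy'
    have h1 : torusDist (tmap (g y)) (tmap (g y')) = ‖g y - g y'‖ := by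
      apply torusDist_tmap
      intro i
      have := hgsmall y hy i
      have := hgsmall y' hy' i
      have h3 : |g y i - g y' i| ≤ |g y i| + |g y' i| := abs_sub _ _
      have h4 : (g y - g y') i = g y i - g y' i := rfl
      calc |g y i - g y' i| ≤ |g y i| + |g y' i| := h3
        _ ≤ 1/2 := by linarith
    rw [htm, htm] at h1
    rw [← h1, hΔnorm y y' hy hy']
  have hg0 : g 0 = 0 := by
    ext i
    have h1 := (hgspec 0 i).2
    have h2 : Δ 0 = 0 := by simp [hΔ]
    rw [h2] at h1
    simp only [Pi.zero_apply, norm_zero, abs_eq_zero] at h1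
    exact h1
  obtain ⟨A, hA⟩ := rigid g hg0 hgi
  refine ⟨A, fun y hy => ?_⟩
  have h1 : tmap (A y) = Δ y := by rw [← hA y hy, htm]
  rw [h1, hΔ]
  simp [sub_add_cancel, add_comm]

lemma locForm_unique {x : Torus n} {A A' : Euc n →ₗᵢ[ℝ] Euc n} {r : ℝ} (hr : 0 < r)
    (hr' : r ≤ 1/8) (h : LocForm ψ x A r) (h' : LocForm ψ x A' r) : A = A' := by
  have key : ∀ y : Euc n, ‖y‖ ≤ r → A y = A' y := by
    intro y hy
    have h1 : ψ x + tmap (A y) = ψ x + tmap (A' y) := by rw [← h y hy, ← h' y hy]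
    have h2 : tmap (A y) = tmap (A' y) := by
      exact add_left_cancel h1
    ext i
    have h3 : ((A y i : ℝ) : AddCircle (1:ℝ)) = (A' y i : ℝ) := congrFun h2 i
    apply coe_eq_coe_small h3
    have h4 : |A y i| ≤ ‖A y‖ := abs_coord_le_norm _ i
    have h5 : |A' y i| ≤ ‖A' y‖ := abs_coord_le_norm _ i
    rw [A.norm_map] at h4
    rw [A'.norm_map] at h5
    calc |A y i - A' y i| ≤ |A y i| + |A' y i| := abs_sub _ _
      _ ≤ ‖y‖ + ‖y‖ := by linarith
      _ < 1 := by linarith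
  apply LinearIsometry.ext
  intro v
  by_cases hv : v = 0
  · simp [hv]
  have hvn : 0 < ‖v‖ := norm_pos_iff.mpr hv
  set y : Euc n := (r / ‖v‖) • v with hy
  have hyn : ‖y‖ ≤ r := by
    rw [hy, norm_smul]
    simp only [Real.norm_eq_abs, abs_div, abs_of_pos hr, abs_of_pos hvn]
    rw [div_mul_cancel₀ _ hvn.ne']
  have h1 : A y = A' y := key y hyn
  have h2 : A y = (r / ‖v‖) • A v := by rw [hy, A.map_smul]
  have h3 : A' y = (r / ‖v‖) • A' v := by rw [hy, A'.map_smul]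
  rw [h2, h3] at h1
  have hrv : r / ‖v‖ ≠ 0 := div_ne_zero hr.ne' hvn.ne'
  exact smul_right_injective _ hrv h1

lemma locForm_mono {x : Torus n} {A : Euc n →ₗᵢ[ℝ] Euc n} {r r' : ℝ} (h : LocForm ψ x A r)
    (hr : r' ≤ r) : LocForm ψ x A r' :=
  fun y hy => h y (hy.trans hr)

lemma locForm_step {x : Torus n} {A : Euc n →ₗᵢ[ℝ] Euc n} (h : LocForm ψ x A (1/8))
    {z : Euc n} (hz : ‖z‖ ≤ 1/16) : LocForm ψ (x + tmap z) A (1/16) := by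
  intro y hy
  have h1 : ‖z + y‖ ≤ 1/8 := by
    calc ‖z + y‖ ≤ ‖z‖ + ‖y‖ := norm_add_le _ _
      _ ≤ 1/8 := by linarith
  have h2 : x + tmap z + tmap y = x + tmap (z + y) := by rw [tmap_add, add_assoc]
  rw [h2, h (z + y) h1, h z (by linarith), A.map_add, tmap_add]
  abel

include hdist in
lemma near_rep (x x' : Torus n) (h : dist x' x < 1/(16 * (Real.sqrt n + 1))) :
    ∃ z : Euc n, ‖z‖ ≤ 1/16 ∧ x' = x + tmap z := by
  classical
  set δ : ℝ := 1/(16 * (Real.sqrt n + 1)) with hδ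
  set z : Euc n := WithLp.toLp 2 (fun i => (exists_rep (x' i - x i)).choose) with hz
  have hzspec : ∀ i, ((z i : ℝ) : AddCircle (1:ℝ)) = x' i - x i ∧ |z i| = ‖x' i - x i‖ :=
    fun i => (exists_rep (x' i - x i)).choose_spec
  have hcoord : ∀ i, |z i| ≤ dist x' x := by
    intro i
    rw [(hzspec i).2, ← dist_eq_norm]
    exact dist_le_pi_dist x' x i
  have hs : (0:ℝ) ≤ Real.sqrt n := Real.sqrt_nonneg _
  refine ⟨z, ?_, ?_⟩
  · rw [EuclideanSpace.norm_eq]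
    have h1 : ∑ i, ‖z i‖^2 ≤ ∑ _i : Fin n, δ^2 := by
      apply Finset.sum_le_sum
      intro i _
      have h2 := hcoord i
      have h3 : |z i| ≤ δ := h2.trans h.le
      rw [Real.norm_eq_abs]
      nlinarith [abs_nonneg (z i)]
    calc Real.sqrt (∑ i, ‖z i‖^2) ≤ Real.sqrt (∑ _i : Fin n, δ^2) := Real.sqrt_le_sqrt h1
      _ = Real.sqrt (n * δ^2) := by rw [Finset.sum_const]; simp [mul_comm]
      _ = Real.sqrt n * δ := by
          rw [Real.sqrt_mul (by positivity), Real.sqrt_sq (by positivity)]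
      _ ≤ 1/16 := by
          rw [hδ, mul_one_div, div_le_div_iff₀ (by positivity) (by norm_num)]
          nlinarith
  · funext i
    have := (hzspec i).1
    simp only [Pi.add_apply, tmap_apply]
    rw [this]
    abel

include hdist in
lemma global_locForm : ∃ A : Euc n →ₗᵢ[ℝ] Euc n, ∀ x : Torus n, LocForm ψ x A (1/8) := by
  classical
  set 𝒜 : Torus n → (Euc n →ₗᵢ[ℝ] Euc n) := fun x => (exists_locForm hdist x).choose with h𝒜
  have h𝒜spec : ∀ x, LocForm ψ x (𝒜 x) (1/8) := fun x => (exists_locForm hdist x).choose_spec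
  set δ : ℝ := 1/(16 * (Real.sqrt n + 1)) with hδ
  have hδpos : 0 < δ := by positivity
  -- local constancy
  have hconst : ∀ x x', dist x' x < δ → 𝒜 x' = 𝒜 x := by
    intro x x' h
    obtain ⟨z, hz, rfl⟩ := near_rep hdist x x' h
    have h1 : LocForm ψ (x + tmap z) (𝒜 x) (1/16) := locForm_step (h𝒜spec x) hz
    have h2 : LocForm ψ (x + tmap z) (𝒜 (x + tmap z)) (1/16) :=
      locForm_mono (h𝒜spec _) (by norm_num)
    exact locForm_unique (by norm_num) (by norm_num) h2 h1
  set S : Set (Torus n) := {x | 𝒜 x = 𝒜 0} with hS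
  have hopen : IsOpen S := by
    rw [Metric.isOpen_iff]
    intro x hx
    exact ⟨δ, hδpos, fun x' hx' => by
      have := hconst x x' (by rwa [Metric.mem_ball] at hx')
      simp only [hS, Set.mem_setOf_eq] at hx ⊢
      rw [this, hx]⟩
  have hclosed : IsOpen Sᶜ := by
    rw [Metric.isOpen_iff]
    intro x hx
    exact ⟨δ, hδpos, fun x' hx' => by
      have := hconst x x' (by rwa [Metric.mem_ball] at hx')
      simp only [hS, Set.mem_compl_iff, Set.mem_setOf_eq] at hx ⊢
      rw [this]; exact hx⟩
  have hclopen : IsClopen S := ⟨isOpen_compl_iff.mp hclosed, hopen⟩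
  have huniv : S = Set.univ := hclopen.eq_univ ⟨0, rfl⟩
  refine ⟨𝒜 0, fun x => ?_⟩
  have hx : x ∈ S := huniv ▸ Set.mem_univ x
  rw [← hx]
  exact h𝒜spec x

include hdist in
lemma global_form : ∃ A : Euc n →ₗᵢ[ℝ] Euc n,
    (∀ x : Torus n, LocForm ψ x A (1/8)) ∧
    ∀ w : Euc n, ψ (tmap w) = ψ 0 + tmap (A w) := by
  obtain ⟨A, hA⟩ := global_locForm hdist
  refine ⟨A, hA, ?_⟩
  set S : Set (Euc n) := {w | ψ (tmap w) = ψ 0 + tmap (A w)} with hS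
  have hopen : IsOpen S := by
    rw [Metric.isOpen_iff]
    intro w hw
    refine ⟨1/16, by norm_num, fun w' hw' => ?_⟩
    rw [Metric.mem_ball, dist_eq_norm] at hw'
    set y : Euc n := w' - w with hy
    have hyn : ‖y‖ ≤ 1/8 := by
      rw [hy]; have := hw'.le; linarith
    have h1 : w' = w + y := by rw [hy]; abel
    simp only [hS, Set.mem_setOf_eq] at hw ⊢
    rw [h1, tmap_add, hA (tmap w) y hyn, hw, A.map_add, tmap_add]
    abel
  have hclosed : IsClosed S := by
    apply isClosed_eq
    · exact (psi_continuous ψ hdist).comp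
        (continuous_pi fun i => (AddCircle.continuous_mk' 1).comp ((continuous_apply i).comp (PiLp.continuous_ofLp 2 _)))
    · apply Continuous.add continuous_const
      exact (continuous_pi fun i =>
        (AddCircle.continuous_mk' 1).comp ((continuous_apply i).comp (PiLp.continuous_ofLp 2 _))).comp A.continuous
  have hclopen : IsClopen S := ⟨hclosed, hopen⟩
  have h0 : (0 : Euc n) ∈ S := by
    simp only [hS, Set.mem_setOf_eq]
    rw [tmap_zero]
    simp
  have huniv : S = Set.univ := hclopen.eq_univ ⟨0, h0⟩
  intro w
  exact (huniv ▸ Set.mem_univ w : w ∈ S)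

lemma sum_single_eq (w : Euc n) : w = ∑ j, w j • EuclideanSpace.single j (1:ℝ) := by
  have := (EuclideanSpace.basisFun (Fin n) ℝ).toBasis.sum_repr w
  simp only [EuclideanSpace.basisFun_repr, OrthonormalBasis.coe_toBasis,
    EuclideanSpace.basisFun_apply] at this
  exact this.symm

lemma tmap_surjective : ∀ x : Torus n, ∃ w : Euc n, tmap w = x := by
  intro x
  classical
  refine ⟨WithLp.toLp 2 (fun i => (exists_rep (x i)).choose), ?_⟩
  funext i
  exact (exists_rep (x i)).choose_spec.1

end TorusAux

open scoped RealInnerProductSpace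

/-- Every isometry of the flat torus `𝕋ⁿ` is of the form
`ψ(x)_i = ε_i x_{σ(i)} + u_i` for a permutation `σ`, signs `ε_i ∈ {−1,1}`
and a translation vector `u`. -/
theorem torus_isometry_form {n : ℕ} (ψ : Torus n → Torus n)
    (hbij : Function.Bijective ψ)
    (hdist : ∀ x y : Torus n, torusDist (ψ x) (ψ y) = torusDist x y) :
    ∃ (σ : Equiv.Perm (Fin n)) (ε : Fin n → ℤ) (u : Torus n),
      (∀ i, ε i = 1 ∨ ε i = -1) ∧
      ∀ (x : Torus n) (i : Fin n), ψ x i = ε i • x (σ i) + u i := by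
  classical
  obtain ⟨A, hAloc, hA⟩ := global_form hdist
  -- coordinates of the images of basis vectors
  set c : Fin n → Euc n := fun j => A (EuclideanSpace.single j (1:ℝ)) with hc
  -- integrality
  have hint : ∀ (m : Fin n → ℤ) (i : Fin n), ∃ k : ℤ, A (WithLp.toLp 2 (fun j => (m j : ℝ)) : Euc n) i = k := by
    intro m i
    set w : Euc n := (WithLp.toLp 2 (fun j => (m j : ℝ)) : Euc n) with hw
    have h1 : tmap w = 0 := by
      funext j
      simp only [tmap_apply]
      rw [show w j = ((m j : ℤ) : ℝ) from rfl]
      exact coe_int_eq_zero (m j) |>.trans rfl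
    have h2 : ψ 0 = ψ 0 + tmap (A w) := by
      have h2' := hA w
      rw [h1] at h2'
      exact h2'
    have h3 : tmap (A w) = 0 := left_eq_add.mp h2
    have h4 : ((A w i : ℝ) : AddCircle (1:ℝ)) = 0 := congrFun h3 i
    rw [AddCircle.coe_eq_zero_iff] at h4
    obtain ⟨k, hk⟩ := h4
    exact ⟨k, by simpa using hk.symm⟩
  have hcint : ∀ j i, ∃ k : ℤ, c j i = k := by
    intro j i
    have := hint (fun l => if l = j then 1 else 0) i
    obtain ⟨k, hk⟩ := this
    refine ⟨k, ?_⟩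
    have heq : (WithLp.toLp 2 (fun l => (Int.cast (if l = j then (1:ℤ) else 0) : ℝ)) : Euc n)
        = EuclideanSpace.single j (1:ℝ) := by
      ext l
      by_cases hl : l = j
      · simp [hl, EuclideanSpace.single_apply]
      · simp [hl, EuclideanSpace.single_apply]
    show A (EuclideanSpace.single j (1:ℝ)) i = (k : ℝ)
    rw [← heq]
    exact hk
  -- norms of columns
  have hcnorm : ∀ j, ∑ i, (c j i)^2 = 1 := by
    intro j
    have h1 : ‖c j‖ = 1 := by
      rw [hc, A.norm_map, EuclideanSpace.norm_single]
      simp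
    have h2 : ‖c j‖^2 = ∑ i, (c j i)^2 := by
      rw [EuclideanSpace.norm_eq, Real.sq_sqrt (by positivity)]
      apply Finset.sum_congr rfl
      intro i _
      rw [Real.norm_eq_abs, sq_abs]
    rw [h1, one_pow] at h2
    exact h2.symm
  -- orthogonality of columns
  have hcorth : ∀ j j', j ≠ j' → ∑ i, c j i * c j' i = 0 := by
    intro j j' hjj
    have h1 : ⟪c j, c j'⟫ = ⟪(EuclideanSpace.single j (1:ℝ)),
        (EuclideanSpace.single j' (1:ℝ))⟫ := by
      simp only [hc]
      exact A.inner_map_map _ _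
    have h2 : ⟪(EuclideanSpace.single j (1:ℝ)), (EuclideanSpace.single j' (1:ℝ))⟫ = 0 := by
      rw [EuclideanSpace.inner_single_left]
      simp [EuclideanSpace.single_apply, hjj, Ne.symm hjj]
    have h3 : ⟪c j, c j'⟫ = ∑ i, c j i * c j' i := by
      rw [PiLp.inner_apply]
      simp [RCLike.inner_apply]
      exact Finset.sum_congr rfl fun k _ => mul_comm _ _
    rw [← h3, h1, h2]
  -- each column is ± a standard basis vector
  have hcol : ∀ j, ∃ i, (c j i = 1 ∨ c j i = -1) ∧ ∀ i', i' ≠ i → c j i' = 0 := by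
    intro j
    have hex : ∃ i, c j i ≠ 0 := by
      by_contra h
      push_neg at h
      have : ∑ i, (c j i)^2 = 0 := by
        apply Finset.sum_eq_zero
        intro i _
        rw [h i]; ring
      rw [hcnorm j] at this
      norm_num at this
    obtain ⟨i, hi⟩ := hex
    obtain ⟨k, hk⟩ := hcint j i
    have hk0 : k ≠ 0 := by
      intro h
      rw [h] at hk
      simp at hk
      exact hi hk
    have hk1 : (1:ℝ) ≤ (c j i)^2 := by
      rw [hk]
      have : 1 ≤ |k| := Int.one_le_abs hk0
      have h2 : (1:ℝ) ≤ |(k:ℝ)| := by exact_mod_cast this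
      nlinarith [abs_nonneg (k:ℝ), sq_abs (k:ℝ)]
    have hsum : (c j i)^2 + ∑ i' ∈ Finset.univ.erase i, (c j i')^2 = 1 := by
      rw [Finset.add_sum_erase Finset.univ (fun i' => (c j i')^2) (Finset.mem_univ i)]
      exact hcnorm j
    have hrest : ∑ i' ∈ Finset.univ.erase i, (c j i')^2 = 0 := by
      have h2 : ∑ i' ∈ Finset.univ.erase i, (c j i')^2 ≥ 0 := by positivity
      linarith
    have hzero : ∀ i', i' ≠ i → c j i' = 0 := by
      intro i' hi'
      have := Finset.sum_eq_zero_iff_of_nonneg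
        (fun i'' _ => sq_nonneg (c j i'')) |>.mp hrest i'
        (Finset.mem_erase.mpr ⟨hi', Finset.mem_univ i'⟩)
      exact pow_eq_zero_iff (by norm_num) |>.mp this
    have hone : (c j i)^2 = 1 := by
      rw [hrest] at hsum
      linarith
    refine ⟨i, ?_, hzero⟩
    have hone' : c j i * c j i = 1 := by nlinarith [hone]
    rcases mul_self_eq_one_iff.mp hone' with h | h
    · exact Or.inl h
    · exact Or.inr h
  -- the permutation
  set τ : Fin n → Fin n := fun j => (hcol j).choose with hτ
  have hτspec : ∀ j, (c j (τ j) = 1 ∨ c j (τ j) = -1) ∧ ∀ i', i' ≠ τ j → c j i' = 0 :=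
    fun j => (hcol j).choose_spec
  have hτinj : Function.Injective τ := by
    intro j j' h
    by_contra hjj
    have h1 := hcorth j j' hjj
    have h2 : ∑ i, c j i * c j' i = c j (τ j) * c j' (τ j) := by
      rw [Finset.sum_eq_single (τ j)]
      · intro i' _ hi'
        rw [(hτspec j).2 i' hi']
        ring
      · intro h; exact absurd (Finset.mem_univ _) h
    rw [h2] at h1
    have hb : c j' (τ j) = 1 ∨ c j' (τ j) = -1 := by rw [h]; exact (hτspec j').1
    rcases (hτspec j).1 with ha | ha <;> rcases hb with hb | hb <;>
      rw [ha, hb] at h1 <;> norm_num at h1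
  have hτbij : Function.Bijective τ := Finite.injective_iff_bijective.mp hτinj
  set σ : Equiv.Perm (Fin n) := (Equiv.ofBijective τ hτbij).symm with hσ
  have hτσ : ∀ i, τ (σ i) = i := fun i => (Equiv.ofBijective τ hτbij).apply_symm_apply i
  -- the signs
  set ε : Fin n → ℤ := fun i => if c (σ i) i = 1 then 1 else -1 with hε
  have hεspec : ∀ i, c (σ i) i = (ε i : ℝ) := by
    intro i
    rcases (hτspec (σ i)).1 with h | h <;> rw [hτσ i] at h
    · simp only [hε]; rw [if_pos h, h]; norm_num
    · simp only [hε]; rw [if_neg (by rw [h]; norm_num), h]; norm_num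
  have hεpm : ∀ i, ε i = 1 ∨ ε i = -1 := by
    intro i
    rw [hε]
    by_cases h : c (σ i) i = 1 <;> simp [h]
  refine ⟨σ, ε, ψ 0, hεpm, ?_⟩
  intro x i
  obtain ⟨w, hw⟩ := tmap_surjective x
  -- compute the i-th coordinate of A w
  have hAw : A w i = (ε i : ℝ) * w (σ i) := by
    have h1 : A w = ∑ j, w j • c j := by
      conv_lhs => rw [sum_single_eq w]
      rw [map_sum]
      apply Finset.sum_congr rfl
      intro j _
      rw [A.map_smul, hc]
    have h2 : A w i = ∑ j, w j * c j i := by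
      rw [h1]
      rw [WithLp.ofLp_sum, Finset.sum_apply i Finset.univ _]
      rfl
    rw [h2]
    rw [Finset.sum_eq_single (σ i) ?_ ?_]
    · rw [hεspec i]; ring
    · intro j _ hj
      have hne : i ≠ τ j := by
        intro hcontr
        apply hj
        have h6 : τ (σ i) = τ j := by rw [hτσ i, hcontr]
        exact (hτinj h6).symm
      rw [(hτspec j).2 i hne]
      ring
    · intro hcontr; exact absurd (Finset.mem_univ _) hcontr
  have h3 : ψ x = ψ 0 + tmap (A w) := by rw [← hw, hA w]
  have h4 : ψ x i = ψ 0 i + ((A w i : ℝ) : AddCircle (1:ℝ)) := by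
    rw [h3]; rfl
  rw [h4, hAw]
  have h5 : (((ε i : ℝ) * w (σ i) : ℝ) : AddCircle (1:ℝ)) = ε i • ((w (σ i) : ℝ) : AddCircle (1:ℝ)) := by
    rw [← AddCircle.coe_zsmul, zsmul_eq_mul]
  rw [h5, ← hw]
  simp only [tmap_apply]
  abel
end
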